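/- Let k be an even positive integer. Identify a necklace in N_{2,k} with an unordered pair {a,b} of nonnegative integers with a + b = k and a ≥ b. Then the map which sends {a,b} to the code (f(0), f(1)) = (a, b) if b is even, and to (f(0), f(1)) = (b−1, a+1) if b is odd, is a well-defined bijection from N_{2,k} to F_{2,k,0}. -/

import Mathlib

open Finset

/-- An `(n,k)`-code: `f : ZMod n → ℕ` with total sum `k`. -/
def IsCode (n : ℕ) [NeZero n] (k : ℕ) (f : ZMod n → ℕ) : Prop :=
  ∑ i : ZMod n, f i = k

/-- The weighted sum `W(f) = ∑ i · f(i)` in `ZMod n`. -/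
def wsum (n : ℕ) [NeZero n] (f : ZMod n → ℕ) : ZMod n :=
  ∑ i : ZMod n, i * (f i : ZMod n)

/-- The rotation `c`, defined by `(c f) i = f (i+1)`. -/
def rot (n : ℕ) [NeZero n] (f : ZMod n → ℕ) : ZMod n → ℕ := fun i => f (i + 1)

/-- A code is aperiodic (has period `n`) if `c^j f = f` implies `n ∣ j`. -/
def Aperiodic (n : ℕ) [NeZero n] (f : ZMod n → ℕ) : Prop :=
  ∀ j : ℕ, (rot n)^[j] f = f → n ∣ j

/-- The rotation class (orbit under `c`) of a code. -/
def rotOrbit (n : ℕ) [NeZero n] (f : ZMod n → ℕ) : Set (ZMod n → ℕ) :=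
  {g | ∃ j : ℕ, (rot n)^[j] f = g}

lemma sum_two (f : ZMod 2 → ℕ) : ∑ i : ZMod 2, f i = f 0 + f 1 := by
  show ∑ i : Fin 2, f i = _
  exact Fin.sum_univ_two f

lemma wsum_two (f : ZMod 2 → ℕ) : wsum 2 f = (f 1 : ZMod 2) := by
  show ∑ i : Fin 2, (i : ZMod 2) * _ = _
  rw [Fin.sum_univ_two]
  show (0 : ZMod 2) * _ + (1 : ZMod 2) * _ = _
  ring
  rfl

lemma cast_two_eq_zero (a : ℕ) : ((a : ZMod 2) = 0) ↔ a % 2 = 0 := by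
  rw [ZMod.natCast_eq_zero_iff, Nat.dvd_iff_mod_eq_zero]

/-- For `n = 2` and `k` even, identifying a necklace in `N_{2,k}` with an unordered
pair `{a,b}`, `a + b = k`, `a ≥ b`: the map sending `{a,b}` to the code `(a, b)` if
`b` is even and to `(b-1, a+1)` if `b` is odd is a well-defined bijection from
`N_{2,k}` onto `F_{2,k,0}`. -/
theorem two_necklace_bijection (k : ℕ) (hk : 0 < k) (hkeven : Even k) :
    Set.BijOn
      (fun p : ℕ × ℕ => fun i : ZMod 2 =>
        if i = 0 then (if p.2 % 2 = 0 then p.1 else p.2 - 1)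
        else (if p.2 % 2 = 0 then p.2 else p.1 + 1))
      {p : ℕ × ℕ | p.1 + p.2 = k ∧ p.2 ≤ p.1}
      {f : ZMod 2 → ℕ | IsCode 2 k f ∧ wsum 2 f = 0} := by
  have hk2 : k % 2 = 0 := Nat.even_iff.mp hkeven
  refine ⟨?_, ?_, ?_⟩
  · rintro ⟨a, b⟩ ⟨hab, hba⟩
    simp only [Set.mem_setOf_eq] at hab hba ⊢
    have hw : wsum 2 _ = _ := wsum_two
      (fun i : ZMod 2 => if i = 0 then (if b % 2 = 0 then a else b - 1)
        else (if b % 2 = 0 then b else a + 1))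
    constructor
    · unfold IsCode
      rw [sum_two]
      simp only [if_pos (show (0 : ZMod 2) = 0 from rfl),
        if_neg (show (1 : ZMod 2) ≠ 0 by decide), if_true]
      rcases Nat.even_or_odd b with hb | hb
      · have hb2 := Nat.even_iff.mp hb
        rw [if_pos hb2, if_pos hb2]; exact hab
      · have hb2 := Nat.odd_iff.mp hb
        rw [if_neg (show ¬ b % 2 = 0 by omega), if_neg (show ¬ b % 2 = 0 by omega)]; omega
    · rw [wsum_two]
      simp only [if_neg (show (1 : ZMod 2) ≠ 0 by decide)]
      rcases Nat.even_or_odd b with hb | hb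
      · have hb2 := Nat.even_iff.mp hb
        rw [if_pos hb2, cast_two_eq_zero]; omega
      · have hb2 := Nat.odd_iff.mp hb
        rw [if_neg (show ¬ b % 2 = 0 by omega), cast_two_eq_zero]; omega
  · rintro ⟨a, b⟩ ⟨hab, hba⟩ ⟨a', b'⟩ ⟨hab', hba'⟩ h
    simp only [Set.mem_setOf_eq] at hab hba hab' hba'
    have h0 := congrFun h 0
    have h1 := congrFun h 1
    simp only [if_pos (show (0 : ZMod 2) = 0 from rfl),
      if_neg (show (1 : ZMod 2) ≠ 0 by decide), if_true] at h0 h1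
    rcases Nat.even_or_odd b with hb | hb <;>
      [replace hb := Nat.even_iff.mp hb; replace hb := Nat.odd_iff.mp hb] <;>
    rcases Nat.even_or_odd b' with hb' | hb' <;>
      [replace hb' := Nat.even_iff.mp hb'; replace hb' := Nat.odd_iff.mp hb';
       replace hb' := Nat.even_iff.mp hb'; replace hb' := Nat.odd_iff.mp hb']
    · rw [if_pos hb, if_pos hb'] at h0 h1
      exact Prod.ext h0 h1
    · rw [if_pos hb, if_neg (show ¬ b' % 2 = 0 by omega)] at h0 h1
      exact Prod.ext (by omega) (by omega)
    · rw [if_neg (show ¬ b % 2 = 0 by omega), if_pos hb'] at h0 h1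
      exact Prod.ext (by omega) (by omega)
    · rw [if_neg (show ¬ b % 2 = 0 by omega),
        if_neg (show ¬ b' % 2 = 0 by omega)] at h0 h1
      exact Prod.ext (by omega) (by omega)
  · rintro f ⟨hc, hw⟩
    unfold IsCode at hc
    rw [sum_two] at hc
    rw [wsum_two, cast_two_eq_zero] at hw
    by_cases hle : f 1 ≤ f 0
    · refine ⟨(f 0, f 1), ⟨hc, hle⟩, ?_⟩
      funext i
      fin_cases i <;> simp [hw] <;> rfl
    · refine ⟨(f 1 - 1, f 0 + 1), ⟨by omega, by omega⟩, ?_⟩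
      have h1 : (f 0 + 1) % 2 = 1 := by omega
      funext i
      fin_cases i <;> simp [h1]
      · exact if_pos rfl
      · exact (if_neg (by intro h; cases h)).trans (by omega)
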